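/- Let (D, ω) be a good weighted digraph and L a good weighted local median order of (D, ω) with feed vertex f. Then for every x ∈ J(f), ω(N^+(x) \ J(f)) ≤ ω(G_L \ J(f)). Consequently, if x has the weighted SNP in the induced subdigraph D[J(f)], then x has the weighted SNP in D. -/

import Mathlib

variable {V : Type*}

/-- Out-neighborhood of `v`. -/
def Nplus (A : V → V → Prop) (v : V) : Set V := {u | A v u}

/-- In-neighborhood of `v`. -/
def Nminus (A : V → V → Prop) (v : V) : Set V := {u | A u v}

/-- Second out-neighborhood: vertices at directed distance exactly 2 from `v`. -/
def Npp (A : V → V → Prop) (v : V) : Set V :=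
  {u | u ≠ v ∧ ¬ A v u ∧ ∃ w, A v w ∧ A w u}

/-- The second neighborhood property. -/
def SNP (A : V → V → Prop) (v : V) : Prop := (Nplus A v).ncard ≤ (Npp A v).ncard

/-- A digraph (given by its arc relation) has no digons: no 2-cycles (this also rules out loops when stated for `u = v`). -/
def NoDigons (A : V → V → Prop) : Prop := ∀ u v, ¬ (A u v ∧ A v u)

/-- A tournament: an orientation of a complete graph. -/
def IsTournament (A : V → V → Prop) : Prop :=
  (∀ v, ¬ A v v) ∧ ∀ u v : V, u ≠ v → (A u v ↔ ¬ A v u)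

/-- `u v` is a missing edge: distinct and non-adjacent. -/
def MissingEdge (A : V → V → Prop) (u v : V) : Prop := u ≠ v ∧ ¬ A u v ∧ ¬ A v u

/-- `x₁y₁` loses to `x₂y₂` (with this labelling of endpoints). -/
def LosesAt (A : V → V → Prop) (x₁ y₁ x₂ y₂ : V) : Prop :=
  A x₁ x₂ ∧ ¬ A x₁ y₂ ∧ y₂ ∉ Npp A x₁ ∧ A y₁ y₂ ∧ ¬ A y₁ x₂ ∧ x₂ ∉ Npp A y₁

/-- The losing relation between (unordered) missing edges: the arcs of the dependency digraph. -/
def EdgeLoses (A : V → V → Prop) (e e' : Sym2 V) : Prop :=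
  ∃ x₁ y₁ x₂ y₂, e = s(x₁, y₁) ∧ e' = s(x₂, y₂) ∧
    MissingEdge A x₁ y₁ ∧ MissingEdge A x₂ y₂ ∧ LosesAt A x₁ y₁ x₂ y₂
/-- `e` is a missing edge of the digraph (as an unordered pair). -/
def IsMissingE (A : V → V → Prop) (e : Sym2 V) : Prop :=
  ∃ u v, e = s(u, v) ∧ MissingEdge A u v

/-- One step of connectivity between missing edges: either an arc (in some
direction) of the dependency digraph `Δ`, or sharing a vertex (adjacency of the
corresponding components in the interval graph `I_D`). -/
def XiStep (A : V → V → Prop) (e e' : Sym2 V) : Prop :=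
  IsMissingE A e ∧ IsMissingE A e' ∧
    (EdgeLoses A e e' ∨ EdgeLoses A e' e ∨ ∃ v, v ∈ e ∧ v ∈ e')

/-- `K(ξ)` for the connected component `ξ` of the interval graph containing the
missing edge `e`: all endpoints of missing edges reachable from `e` by `XiStep`s. -/
def KXi (A : V → V → Prop) (e : Sym2 V) : Set V :=
  {v | ∃ e', Relation.ReflTransGen (XiStep A) e e' ∧ IsMissingE A e' ∧ v ∈ e'}

/-- `J(f)`: `{f}` if `f` is a whole vertex, and `K(ξ)` for the unique component
`ξ` of the interval graph with `f ∈ K(ξ)` otherwise. -/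
def Jset (A : V → V → Prop) (f : V) : Set V :=
  {v | v = f ∨ ∃ e, IsMissingE A e ∧ f ∈ e ∧ v ∈ KXi A e}

/-- `K` is an interval of the digraph. -/
def IsInterval (A : V → V → Prop) (K : Set V) : Prop :=
  ∀ u ∈ K, ∀ v ∈ K, Nplus A u \ K = Nplus A v \ K ∧ Nminus A u \ K = Nminus A v \ K

/-- A good digraph: every set `K(ξ)` is an interval of the digraph. -/
def GoodDigraph (A : V → V → Prop) : Prop :=
  ∀ e, IsMissingE A e → IsInterval A (KXi A e)

/-- An order of the vertices satisfying the (weighted) feedback property. -/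
def FeedbackOrder {n : ℕ} (A : V → V → Prop) (ω : V → ℝ) (L : Fin n ≃ V) : Prop :=
  ∀ i j : Fin n, i ≤ j →
    (∑ᶠ k ∈ {k : Fin n | i ≤ k ∧ k ≤ j ∧ A (L k) (L i)}, ω (L k)) ≤
      (∑ᶠ k ∈ {k : Fin n | i ≤ k ∧ k ≤ j ∧ A (L i) (L k)}, ω (L k)) ∧
    (∑ᶠ k ∈ {k : Fin n | i ≤ k ∧ k ≤ j ∧ A (L j) (L k)}, ω (L k)) ≤
      (∑ᶠ k ∈ {k : Fin n | i ≤ k ∧ k ≤ j ∧ A (L k) (L j)}, ω (L k))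

/-- A good order: every `K(ξ)` is an interval (a set of consecutive vertices) of the order. -/
def GoodOrder {n : ℕ} (A : V → V → Prop) (L : Fin n ≃ V) : Prop :=
  ∀ e, IsMissingE A e → ∃ lo hi : Fin n, ∀ k : Fin n, L k ∈ KXi A e ↔ (lo ≤ k ∧ k ≤ hi)

/-- The set of good vertices of an order with feed vertex `L last`. -/
def goodSet {n : ℕ} (A : V → V → Prop) (L : Fin n ≃ V) (last : Fin n) : Set V :=
  {v | v ≠ L last ∧ ¬ A (L last) v ∧
    ∃ i j : Fin n, i ≤ j ∧ L j = v ∧ A (L last) (L i) ∧ A (L i) v}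

/-- Out-neighborhood of `x` in the subdigraph induced on `K`. -/
def NplusIn (A : V → V → Prop) (K : Set V) (x : V) : Set V := {u ∈ K | A x u}

/-- Second out-neighborhood of `x` in the subdigraph induced on `K`. -/
def NppIn (A : V → V → Prop) (K : Set V) (x : V) : Set V :=
  {u ∈ K | u ≠ x ∧ ¬ A x u ∧ ∃ w ∈ K, A x w ∧ A w u}

private lemma fs_mono {α : Type*} [Finite α] (g : α → ℝ) (hg : ∀ v, 0 ≤ g v) {s u : Set α}
    (h : s ⊆ u) : (∑ᶠ v ∈ s, g v) ≤ ∑ᶠ v ∈ u, g v := by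
  rw [finsum_mem_eq_sum g (Set.toFinite _), finsum_mem_eq_sum g (Set.toFinite _)]
  apply Finset.sum_le_sum_of_subset_of_nonneg
  · intro x hx
    simp only [Set.Finite.mem_toFinset, Set.mem_inter_iff] at hx ⊢
    exact ⟨h hx.1, hx.2⟩
  · intro x _ _
    exact hg x

private lemma fs_nonneg {α : Type*} [Finite α] (g : α → ℝ) (hg : ∀ v, 0 ≤ g v) (s : Set α) :
    0 ≤ ∑ᶠ v ∈ s, g v := by
  rw [finsum_mem_eq_sum g (Set.toFinite _)]
  exact Finset.sum_nonneg fun i _ => hg i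

/-- for a good weighted local median order `L` of a good weighted
digraph with feed vertex `f`, every `x ∈ J(f)` satisfies
`ω(N⁺(x) \ J(f)) ≤ ω(G_L \ J(f))`; consequently if `x` has the weighted SNP in
`D[J(f)]` then it has the weighted SNP in `D`. -/
theorem good_order_feed_interval_SNP [Fintype V]
    (A : V → V → Prop) (hA : NoDigons A)
    (ω : V → ℝ) (hω : ∀ v, 0 ≤ ω v)
    (hD : GoodDigraph A)
    {n : ℕ} (hn : 0 < n) (L : Fin n ≃ V)
    (hL : FeedbackOrder A ω L) (hLgood : GoodOrder A L)
    (last : Fin n) (hlast : (last : ℕ) = n - 1)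
    (f : V) (hf : f = L last) :
    ∀ x ∈ Jset A f,
      (∑ᶠ v ∈ (Nplus A x \ Jset A f), ω v) ≤
        (∑ᶠ v ∈ (goodSet A L last \ Jset A f), ω v) ∧
      ((∑ᶠ v ∈ NplusIn A (Jset A f) x, ω v) ≤ (∑ᶠ v ∈ NppIn A (Jset A f) x, ω v) →
        (∑ᶠ v ∈ Nplus A x, ω v) ≤ (∑ᶠ v ∈ Npp A x, ω v)) := by
  classical
  have hnoloop : ∀ v, ¬ A v v := fun v h => hA v v ⟨h, h⟩
  have hfJ : f ∈ Jset A f := Or.inl rfl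
  have hsymm : Symmetric (XiStep A) := by
    rintro e e' ⟨h1, h2, h3⟩
    refine ⟨h2, h1, ?_⟩
    rcases h3 with h | h | ⟨v, hv1, hv2⟩
    · exact Or.inr (Or.inl h)
    · exact Or.inl h
    · exact Or.inr (Or.inr ⟨v, hv2, hv1⟩)
  have hsymmR : ∀ {e e' : Sym2 V}, Relation.ReflTransGen (XiStep A) e e' →
      Relation.ReflTransGen (XiStep A) e' e :=
    fun h => by
      haveI : Std.Symm (XiStep A) := ⟨fun _ _ hh => hsymm hh⟩
      exact Relation.ReflTransGen.symmetric.symm _ _ h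
  have hmax : ∀ k : Fin n, k ≤ last := by
    intro k
    rw [Fin.le_def, hlast]
    exact Nat.le_sub_one_of_lt k.isLt
  obtain ⟨hJint, t, hT⟩ : IsInterval A (Jset A f) ∧ ∃ t : Fin n, ∀ k, L k ∈ Jset A f ↔ t ≤ k := by
    by_cases hfm : ∃ u, MissingEdge A f u
    · obtain ⟨u, hu⟩ := hfm
      have hm0 : IsMissingE A s(f, u) := ⟨f, u, rfl, hu⟩
      have hf0 : f ∈ s(f, u) := Sym2.mem_mk_left f u
      have hfK : f ∈ KXi A s(f, u) := ⟨s(f, u), Relation.ReflTransGen.refl, hm0, hf0⟩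
      have hJK : Jset A f = KXi A s(f, u) := by
        ext v
        constructor
        · rintro (rfl | ⟨e, hme, hfe, e₃, hre, hm₃, hv⟩)
          · exact hfK
          · exact ⟨e₃, Relation.ReflTransGen.head ⟨hm0, hme, Or.inr (Or.inr ⟨f, hf0, hfe⟩)⟩ hre,
              hm₃, hv⟩
        · intro hv
          exact Or.inr ⟨s(f, u), hm0, hf0, hv⟩
      obtain ⟨lo, hi, hlh⟩ := hLgood s(f, u) hm0
      have hhi : hi = last := le_antisymm (hmax hi) ((hlh last).1 (by rw [← hf]; exact hfK)).2
      refine ⟨by rw [hJK]; exact hD _ hm0, lo, fun k => ?_⟩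
      rw [hJK, hlh k, hhi]
      exact ⟨fun h => h.1, fun h => ⟨h, hmax k⟩⟩
    · have hJeq : Jset A f = {f} := by
        ext v
        constructor
        · rintro (rfl | ⟨e, ⟨a, b, rfl, hm⟩, hfe, -⟩)
          · rfl
          · exfalso
            rcases Sym2.mem_iff.1 hfe with rfl | rfl
            · exact hfm ⟨b, hm⟩
            · exact hfm ⟨a, hm.1.symm, hm.2.2, hm.2.1⟩
        · rintro rfl
          exact Or.inl rfl
      refine ⟨?_, last, fun k => ?_⟩
      · rw [hJeq]
        rintro a ha b hb
        rw [Set.mem_singleton_iff] at ha hb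
        rw [ha, hb]
        exact ⟨rfl, rfl⟩
      · rw [hJeq, Set.mem_singleton_iff, hf]
        constructor
        · intro h
          have hk : k = last := L.injective h
          exact hk ▸ le_rfl
        · intro h
          rw [le_antisymm (hmax k) h]
  have htlast : t ≤ last := (hT last).1 (by rw [← hf]; exact hfJ)
  have hnotJ : ∀ k : Fin n, k < t → L k ∉ Jset A f :=
    fun k hk h => absurd ((hT k).1 h) (not_le.2 hk)
  have hJt : L t ∈ Jset A f := (hT t).2 le_rfl
  have hNp : ∀ x ∈ Jset A f, ∀ v, v ∉ Jset A f → (A x v ↔ A f v) := by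
    intro x hx v hv
    have h := (hJint x hx f hfJ).1
    constructor
    · intro h1
      have hm : v ∈ Nplus A x \ Jset A f := ⟨h1, hv⟩
      rw [h] at hm
      exact hm.1
    · intro h1
      have hm : v ∈ Nplus A f \ Jset A f := ⟨h1, hv⟩
      rw [← h] at hm
      exact hm.1
  have hNm : ∀ x ∈ Jset A f, ∀ v, v ∉ Jset A f → (A v x ↔ A v f) := by
    intro x hx v hv
    have h := (hJint x hx f hfJ).2
    constructor
    · intro h1
      have hm : v ∈ Nminus A x \ Jset A f := ⟨h1, hv⟩
      rw [h] at hm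
      exact hm.1
    · intro h1
      have hm : v ∈ Nminus A f \ Jset A f := ⟨h1, hv⟩
      rw [← h] at hm
      exact hm.1
  -- Claim B : a "bad" vertex dominates every earlier out-neighbour of f
  have claimB : ∀ i j : Fin n, i ≤ j → j < t → A f (L i) → ¬ A f (L j) →
      L j ∉ goodSet A L last → A (L j) (L i) := by
    intro i j hij hjt hfi hfj hjg
    have hiJ : L i ∉ Jset A f := hnotJ i (lt_of_le_of_lt hij hjt)
    have hne : L i ≠ L j := fun h => hfj (h ▸ hfi)
    have hjlast : j ≠ last := ne_of_lt (lt_of_lt_of_le hjt htlast)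
    have hpb : ¬ A (L i) (L j) := by
      intro h
      refine hjg ⟨fun hh => hjlast (L.injective hh), ?_, i, j, hij, rfl, ?_, h⟩
      · rw [← hf]; exact hfj
      · rw [← hf]; exact hfi
    by_contra hbp
    have hmiss : MissingEdge A (L i) (L j) := ⟨hne, hpb, hbp⟩
    have hme : IsMissingE A s(L i, L j) := ⟨_, _, rfl, hmiss⟩
    by_cases hfK : f ∈ KXi A s(L i, L j)
    · obtain ⟨e₁, hre, hm₁, hfe₁⟩ := hfK
      exact hiJ (Or.inr ⟨e₁, hm₁, hfe₁, s(L i, L j), hsymmR hre, hme, Sym2.mem_mk_left _ _⟩)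
    · have hiK : L i ∈ KXi A s(L i, L j) :=
        ⟨_, Relation.ReflTransGen.refl, hme, Sym2.mem_mk_left _ _⟩
      have hjK : L j ∈ KXi A s(L i, L j) :=
        ⟨_, Relation.ReflTransGen.refl, hme, Sym2.mem_mk_right _ _⟩
      have h2 := (hD _ hme (L i) hiK (L j) hjK).2
      have hmem : f ∈ Nminus A (L i) \ KXi A s(L i, L j) := ⟨hfi, hfK⟩
      rw [h2] at hmem
      exact hfj hmem.1
  -- Claim G : the main counting argument
  have claimG : ∀ m : ℕ, ∀ i : Fin n, n - (i : ℕ) ≤ m →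
      (∑ᶠ k ∈ {k : Fin n | i ≤ k ∧ k < t ∧ A f (L k)}, ω (L k)) ≤
      (∑ᶠ k ∈ {k : Fin n | i ≤ k ∧ k < t ∧ L k ∈ goodSet A L last}, ω (L k)) := by
    intro m
    induction m with
    | zero =>
      intro i hi
      exact absurd hi (by have := i.isLt; omega)
    | succ m ih =>
      intro i hi
      by_cases hit : i ≤ t
      swap
      · have hempty : {k : Fin n | i ≤ k ∧ k < t ∧ A f (L k)} = ∅ := by
          ext k
          simp only [Set.mem_setOf_eq, Set.mem_empty_iff_false, iff_false, not_and]
          intro h1 h2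
          exact absurd (le_of_lt (lt_of_le_of_lt h1 h2)) hit
        rw [hempty, finsum_mem_empty]
        exact fs_nonneg (fun k : Fin n => ω (L k)) (fun k => hω _) _
      by_cases hbad : ∃ k : Fin n, i ≤ k ∧ k < t ∧ ¬ A f (L k) ∧ L k ∉ goodSet A L last
      · obtain ⟨j, hjS, hjmin⟩ := Set.exists_min_image
          {k : Fin n | i ≤ k ∧ k < t ∧ ¬ A f (L k) ∧ L k ∉ goodSet A L last} id
          (Set.toFinite _) hbad
        obtain ⟨hij, hjt, hjP, hjG⟩ := hjS
        have hjlast : j ≠ last := ne_of_lt (lt_of_lt_of_le hjt htlast)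
        have hj1 : (j : ℕ) + 1 < n := by
          have h1 : (j : ℕ) < (t : ℕ) := hjt
          have h2 : (t : ℕ) ≤ (last : ℕ) := htlast
          omega
        set j' : Fin n := ⟨(j : ℕ) + 1, hj1⟩ with hj'def
        have hjj' : j ≤ j' := by rw [Fin.le_def]; exact Nat.le_succ _
        have hfb := (hL i j hij).2
        have s1 : (∑ᶠ k ∈ {k : Fin n | i ≤ k ∧ k ≤ j ∧ A f (L k)}, ω (L k)) ≤
            ∑ᶠ k ∈ {k : Fin n | i ≤ k ∧ k ≤ j ∧ A (L j) (L k)}, ω (L k) := by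
          apply fs_mono _ (fun k => hω _)
          rintro k ⟨h1, h2, h3⟩
          exact ⟨h1, h2, claimB k j h2 hjt h3 hjP hjG⟩
        have s2 : (∑ᶠ k ∈ {k : Fin n | i ≤ k ∧ k ≤ j ∧ A (L k) (L j)}, ω (L k)) ≤
            ∑ᶠ k ∈ {k : Fin n | i ≤ k ∧ k ≤ j ∧ L k ∈ goodSet A L last}, ω (L k) := by
          apply fs_mono _ (fun k => hω _)
          rintro k ⟨h1, h2, h3⟩
          refine ⟨h1, h2, ?_⟩
          by_cases hfk : A f (L k)
          · exfalso
            refine hjG ⟨fun hh => hjlast (L.injective hh), ?_, k, j, h2, rfl, ?_, h3⟩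
            · rw [← hf]; exact hjP
            · rw [← hf]; exact hfk
          · by_contra hkg
            have hkS : k ∈ {k : Fin n | i ≤ k ∧ k < t ∧ ¬ A f (L k) ∧ L k ∉ goodSet A L last} :=
              ⟨h1, lt_of_le_of_lt h2 hjt, hfk, hkg⟩
            have hjk : j ≤ k := hjmin k hkS
            have hkj : k ≠ j := fun hh => hnoloop (L j) (hh ▸ h3)
            exact hkj (le_antisymm h2 hjk)
        have ihj : (∑ᶠ k ∈ {k : Fin n | j' ≤ k ∧ k < t ∧ A f (L k)}, ω (L k)) ≤
            ∑ᶠ k ∈ {k : Fin n | j' ≤ k ∧ k < t ∧ L k ∈ goodSet A L last}, ω (L k) := by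
          apply ih
          have h1 : (i : ℕ) ≤ (j : ℕ) := hij
          have h2 : (j' : ℕ) = (j : ℕ) + 1 := rfl
          omega
        have hsplitL : {k : Fin n | i ≤ k ∧ k < t ∧ A f (L k)} =
            {k : Fin n | i ≤ k ∧ k ≤ j ∧ A f (L k)} ∪
            {k : Fin n | j' ≤ k ∧ k < t ∧ A f (L k)} := by
          ext k
          simp only [Set.mem_setOf_eq, Set.mem_union]
          constructor
          · rintro ⟨h1, h2, h3⟩
            rcases le_or_gt k j with h | h
            · exact Or.inl ⟨h1, h, h3⟩
            · refine Or.inr ⟨?_, h2, h3⟩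
              rw [Fin.le_def]
              exact h
          · rintro (⟨h1, h2, h3⟩ | ⟨h1, h2, h3⟩)
            · exact ⟨h1, lt_of_le_of_lt h2 hjt, h3⟩
            · exact ⟨le_trans hij (le_trans hjj' h1), h2, h3⟩
        have hdisjL : Disjoint {k : Fin n | i ≤ k ∧ k ≤ j ∧ A f (L k)}
            {k : Fin n | j' ≤ k ∧ k < t ∧ A f (L k)} := by
          rw [Set.disjoint_left]
          rintro k ⟨-, h2, -⟩ ⟨h1, -, -⟩
          have h2' : (k : ℕ) ≤ (j : ℕ) := h2
          have h1' : (j : ℕ) + 1 ≤ (k : ℕ) := h1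
          omega
        have hdisjU : Disjoint {k : Fin n | i ≤ k ∧ k ≤ j ∧ L k ∈ goodSet A L last}
            {k : Fin n | j' ≤ k ∧ k < t ∧ L k ∈ goodSet A L last} := by
          rw [Set.disjoint_left]
          rintro k ⟨-, h2, -⟩ ⟨h1, -, -⟩
          have h2' : (k : ℕ) ≤ (j : ℕ) := h2
          have h1' : (j : ℕ) + 1 ≤ (k : ℕ) := h1
          omega
        have hU : {k : Fin n | i ≤ k ∧ k ≤ j ∧ L k ∈ goodSet A L last} ∪
            {k : Fin n | j' ≤ k ∧ k < t ∧ L k ∈ goodSet A L last} ⊆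
            {k : Fin n | i ≤ k ∧ k < t ∧ L k ∈ goodSet A L last} := by
          rintro k (⟨h1, h2, h3⟩ | ⟨h1, h2, h3⟩)
          · exact ⟨h1, lt_of_le_of_lt h2 hjt, h3⟩
          · exact ⟨le_trans hij (le_trans hjj' h1), h2, h3⟩
        calc (∑ᶠ k ∈ {k : Fin n | i ≤ k ∧ k < t ∧ A f (L k)}, ω (L k))
            = (∑ᶠ k ∈ {k : Fin n | i ≤ k ∧ k ≤ j ∧ A f (L k)}, ω (L k)) +
              (∑ᶠ k ∈ {k : Fin n | j' ≤ k ∧ k < t ∧ A f (L k)}, ω (L k)) := by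
              rw [hsplitL]
              exact finsum_mem_union hdisjL (Set.toFinite _) (Set.toFinite _)
          _ ≤ (∑ᶠ k ∈ {k : Fin n | i ≤ k ∧ k ≤ j ∧ L k ∈ goodSet A L last}, ω (L k)) +
              (∑ᶠ k ∈ {k : Fin n | j' ≤ k ∧ k < t ∧ L k ∈ goodSet A L last}, ω (L k)) :=
              add_le_add (le_trans s1 (le_trans hfb s2)) ihj
          _ = ∑ᶠ k ∈ ({k : Fin n | i ≤ k ∧ k ≤ j ∧ L k ∈ goodSet A L last} ∪
              {k : Fin n | j' ≤ k ∧ k < t ∧ L k ∈ goodSet A L last}), ω (L k) :=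
              (finsum_mem_union hdisjU (Set.toFinite _) (Set.toFinite _)).symm
          _ ≤ ∑ᶠ k ∈ {k : Fin n | i ≤ k ∧ k < t ∧ L k ∈ goodSet A L last}, ω (L k) :=
              fs_mono _ (fun k => hω _) hU
      · have hfb := (hL i t hit).2
        have hLeq : {k : Fin n | i ≤ k ∧ k ≤ t ∧ A (L t) (L k)} =
            {k : Fin n | i ≤ k ∧ k < t ∧ A f (L k)} := by
          ext k
          simp only [Set.mem_setOf_eq]
          constructor
          · rintro ⟨h1, h2, h3⟩
            have hkt : k < t := lt_of_le_of_ne h2 (fun h => hnoloop (L t) (by rw [h] at h3; exact h3))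
            exact ⟨h1, hkt, (hNp (L t) hJt (L k) (hnotJ k hkt)).1 h3⟩
          · rintro ⟨h1, h2, h3⟩
            exact ⟨h1, le_of_lt h2, (hNp (L t) hJt (L k) (hnotJ k h2)).2 h3⟩
        have hRsub : {k : Fin n | i ≤ k ∧ k ≤ t ∧ A (L k) (L t)} ⊆
            {k : Fin n | i ≤ k ∧ k < t ∧ L k ∈ goodSet A L last} := by
          rintro k ⟨h1, h2, h3⟩
          have hkt : k < t := lt_of_le_of_ne h2 (fun h => hnoloop (L t) (by rw [h] at h3; exact h3))
          have hkJ := hnotJ k hkt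
          have hkf : A (L k) f := (hNm (L t) hJt (L k) hkJ).1 h3
          have hnfk : ¬ A f (L k) := fun h => hA f (L k) ⟨h, hkf⟩
          refine ⟨h1, hkt, ?_⟩
          by_contra hg
          exact hbad ⟨k, h1, hkt, hnfk, hg⟩
        rw [← hLeq]
        exact le_trans hfb (fs_mono _ (fun k => hω _) hRsub)
  -- reindexing sums over V by the order
  have hreidx : ∀ S : Set V, (∑ᶠ v ∈ S, ω v) = ∑ᶠ k ∈ (L ⁻¹' S : Set (Fin n)), ω (L k) := by
    intro S
    calc (∑ᶠ v ∈ S, ω v)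
        = ∑ᶠ v ∈ (L : Fin n → V) '' (L ⁻¹' S), ω v := by
          rw [Set.image_preimage_eq S L.surjective]
      _ = ∑ᶠ k ∈ (L ⁻¹' S : Set (Fin n)), ω (L k) :=
          finsum_mem_image (fun a _ b _ h => L.injective h)
  have keyP : (∑ᶠ v ∈ (Nplus A f \ Jset A f), ω v) ≤
      ∑ᶠ v ∈ (goodSet A L last \ Jset A f), ω v := by
    rw [hreidx (Nplus A f \ Jset A f), hreidx (goodSet A L last \ Jset A f)]
    have e1 : (L ⁻¹' (Nplus A f \ Jset A f) : Set (Fin n)) =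
        {k : Fin n | (⟨0, hn⟩ : Fin n) ≤ k ∧ k < t ∧ A f (L k)} := by
      ext k
      simp only [Set.mem_preimage, Set.mem_diff, Set.mem_setOf_eq, Nplus]
      constructor
      · rintro ⟨h1, h2⟩
        exact ⟨by rw [Fin.le_def]; exact Nat.zero_le _, not_le.1 (fun h => h2 ((hT k).2 h)), h1⟩
      · rintro ⟨-, h2, h3⟩
        exact ⟨h3, hnotJ k h2⟩
    have e2 : (L ⁻¹' (goodSet A L last \ Jset A f) : Set (Fin n)) =
        {k : Fin n | (⟨0, hn⟩ : Fin n) ≤ k ∧ k < t ∧ L k ∈ goodSet A L last} := by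
      ext k
      simp only [Set.mem_preimage, Set.mem_diff, Set.mem_setOf_eq]
      constructor
      · rintro ⟨h1, h2⟩
        exact ⟨by rw [Fin.le_def]; exact Nat.zero_le _, not_le.1 (fun h => h2 ((hT k).2 h)), h1⟩
      · rintro ⟨-, h2, h3⟩
        exact ⟨h3, hnotJ k h2⟩
    rw [e1, e2]
    exact claimG n ⟨0, hn⟩ (by omega)
  intro x hx
  have hNpx : Nplus A x \ Jset A f = Nplus A f \ Jset A f := (hJint x hx f hfJ).1
  refine ⟨by rw [hNpx]; exact keyP, ?_⟩
  intro hin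
  have hdisj1 : Disjoint (NplusIn A (Jset A f) x) (Nplus A x \ Jset A f) := by
    rw [Set.disjoint_left]
    rintro v ⟨hvJ, -⟩ ⟨-, hvnJ⟩
    exact hvnJ hvJ
  have hu1 : Nplus A x = NplusIn A (Jset A f) x ∪ (Nplus A x \ Jset A f) := by
    ext v
    simp only [NplusIn, Nplus, Set.mem_setOf_eq, Set.mem_union, Set.mem_diff]
    constructor
    · intro h
      by_cases hv : v ∈ Jset A f
      · exact Or.inl ⟨hv, h⟩
      · exact Or.inr ⟨h, hv⟩
    · rintro (⟨-, h⟩ | ⟨h, -⟩) <;> exact h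
  have hsub2 : NppIn A (Jset A f) x ∪ (goodSet A L last \ Jset A f) ⊆ Npp A x := by
    rintro v (⟨hvJ, hvx, hxv, w, hwJ, hxw, hwv⟩ | ⟨hvG, hvnJ⟩)
    · exact ⟨hvx, hxv, w, hxw, hwv⟩
    · obtain ⟨hvlast, hnAv, i, jdx, hij, hLj, hAfi, hAiv⟩ := hvG
      have hvx2 : v ≠ x := fun h => hvnJ (h ▸ hx)
      have hnfv : ¬ A f v := by rw [hf]; exact hnAv
      have hnxv : ¬ A x v := fun h => hnfv ((hNp x hx v hvnJ).1 h)
      have hjt : jdx < t := not_le.1 (fun h => hvnJ (hLj ▸ (hT jdx).2 h))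
      have hiJ : L i ∉ Jset A f := hnotJ i (lt_of_le_of_lt hij hjt)
      have hAfi' : A f (L i) := by rw [hf]; exact hAfi
      have hAxi : A x (L i) := (hNp x hx (L i) hiJ).2 hAfi'
      exact ⟨hvx2, hnxv, L i, hAxi, hAiv⟩
  have hdisj2 : Disjoint (NppIn A (Jset A f) x) (goodSet A L last \ Jset A f) := by
    rw [Set.disjoint_left]
    rintro v ⟨hvJ, -⟩ ⟨-, hvnJ⟩
    exact hvnJ hvJ
  calc (∑ᶠ v ∈ Nplus A x, ω v)
      = ∑ᶠ v ∈ (NplusIn A (Jset A f) x ∪ (Nplus A x \ Jset A f)), ω v := by rw [← hu1]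
    _ = (∑ᶠ v ∈ NplusIn A (Jset A f) x, ω v) + ∑ᶠ v ∈ (Nplus A x \ Jset A f), ω v :=
        finsum_mem_union hdisj1 (Set.toFinite _) (Set.toFinite _)
    _ ≤ (∑ᶠ v ∈ NppIn A (Jset A f) x, ω v) + ∑ᶠ v ∈ (goodSet A L last \ Jset A f), ω v :=
        add_le_add hin (by rw [hNpx]; exact keyP)
    _ = ∑ᶠ v ∈ (NppIn A (Jset A f) x ∪ (goodSet A L last \ Jset A f)), ω v :=
        (finsum_mem_union hdisj2 (Set.toFinite _) (Set.toFinite _)).symm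
    _ ≤ ∑ᶠ v ∈ Npp A x, ω v := fs_mono ω hω hsub2
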